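/- Let a ≠ 0, b ∈ ℝ, R ≥ 1, and u0(x) = a·x1·xn + b·xn² on ℝⁿ. Then there exist constants c > 0 and δ > 0, depending only on a, b and R, such that |∇u0(x)| ≥ c for every x in the set D = {x = (x1, x'', xn) : R/2 < |x| < R, |x''| ≤ δ}. -/

import Mathlib

/-- Auxiliary: splitting a sum over `Fin n` into two distinguished indices and the rest. -/
lemma stmt17_sum_split (n : ℕ) (x : Fin n → ℝ) (i0 iN : Fin n) (hne : i0 ≠ iN) :
    ∑ i, (x i)^2 = x i0 ^ 2 + x iN ^ 2 + ∑ i ∈ Finset.univ.filter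
      (fun i : Fin n => i ≠ i0 ∧ i ≠ iN), (x i) ^ 2 := by
  rw [← Finset.sum_filter_add_sum_filter_not Finset.univ (fun i : Fin n => i ≠ i0 ∧ i ≠ iN)]
  have h : Finset.univ.filter (fun i : Fin n => ¬(i ≠ i0 ∧ i ≠ iN)) = {i0, iN} := by
    ext i
    simp only [Finset.mem_filter, Finset.mem_univ, true_and, not_and_or, not_ne_iff,
      Finset.mem_insert, Finset.mem_singleton]
  rw [h, Finset.sum_pair hne]
  ring

/-- Auxiliary: the pure-real arithmetic at the heart of the nondegeneracy estimate. -/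
lemma stmt17_arith (a b R x0 xN g : ℝ) (hapos : 0 < |a|) (hRpos : 0 < R)
    (h1 : x0 ^ 2 + xN ^ 2 > R ^ 2 / 4 - (R / 4) ^ 2)
    (key0 : |a * xN| ≤ g) (keyN : |a * x0 + 2 * b * xN| ≤ g) :
    |a| * (|a| * R / (8 * (|a| + |b| + 1))) ≤ g := by
  set t : ℝ := |a| * R / (8 * (|a| + |b| + 1)) with ht
  have hden : (0:ℝ) < 8 * (|a| + |b| + 1) := by positivity
  have htpos : 0 < t := by positivity
  have htR : t ≤ R / 8 := by
    rw [ht, div_le_div_iff₀ hden (by norm_num)]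
    nlinarith [abs_nonneg a, abs_nonneg b]
  by_cases hc : t ≤ |xN|
  · calc |a| * t ≤ |a| * |xN| := mul_le_mul_of_nonneg_left hc (abs_nonneg a)
      _ = |a * xN| := (abs_mul a _).symm
      _ ≤ g := key0
  · push_neg at hc
    have hxN : xN ^ 2 < (R / 8) ^ 2 := by
      calc xN ^ 2 = |xN| ^ 2 := (sq_abs _).symm
        _ < t ^ 2 := by nlinarith [abs_nonneg xN]
        _ ≤ (R / 8) ^ 2 := by nlinarith
    have hx0 : 3 * R / 8 ≤ |x0| := by
      have hsq : (3 * R / 8) ^ 2 ≤ x0 ^ 2 := by nlinarith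
      calc 3 * R / 8 = Real.sqrt ((3 * R / 8) ^ 2) := (Real.sqrt_sq (by positivity)).symm
        _ ≤ Real.sqrt (x0 ^ 2) := Real.sqrt_le_sqrt hsq
        _ = |x0| := Real.sqrt_sq_eq_abs _
    have h2 : |a| * (3 * R / 8) ≤ |a * x0| := by
      rw [abs_mul]; exact mul_le_mul_of_nonneg_left hx0 (abs_nonneg a)
    have h3 : |2 * b * xN| ≤ 2 * |b| * t := by
      rw [abs_mul, abs_mul, abs_two]
      nlinarith [abs_nonneg b, abs_nonneg xN, hc.le]
    have h4 : |a| * t + 2 * |b| * t ≤ |a| * (3 * R / 8) := by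
      have hfrac : t * (8 * (|a| + |b| + 1)) = |a| * R := by
        rw [ht]; field_simp
      nlinarith [abs_nonneg a, abs_nonneg b, mul_pos hapos hRpos,
        mul_nonneg (abs_nonneg a) (abs_nonneg b)]
    calc |a| * t ≤ |a * x0| - |2 * b * xN| := by linarith
      _ = |a * x0| - |-(2 * b * xN)| := by rw [abs_neg]
      _ ≤ |a * x0 - -(2 * b * xN)| := abs_sub_abs_le_abs_sub _ _
      _ = |a * x0 + 2 * b * xN| := by ring_nf
      _ ≤ g := keyN

/-- nondegeneracy of ∇u0, u0(x) = a·x1·xn + b·xn², a ≠ 0, on the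
thin cylinder D = {R/2 < |x| < R, |x''| ≤ δ}, where x'' = (x2, …, x_{n−1}) are
the middle coordinates. -/
theorem stmt17 (n : ℕ) (hn : 2 ≤ n) (a b R : ℝ) (ha : a ≠ 0) (hR : 1 ≤ R)
    (u0 : EuclideanSpace ℝ (Fin n) → ℝ)
    (hu0 : ∀ x, u0 x = a * x ⟨0, by omega⟩ * x ⟨n - 1, by omega⟩
      + b * (x ⟨n - 1, by omega⟩) ^ 2) :
    ∃ c > 0, ∃ δ > 0, ∀ x : EuclideanSpace ℝ (Fin n),
      R / 2 < ‖x‖ → ‖x‖ < R →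
      Real.sqrt (∑ i ∈ Finset.univ.filter
        (fun i : Fin n => i ≠ ⟨0, by omega⟩ ∧ i ≠ ⟨n - 1, by omega⟩),
        (x i) ^ 2) ≤ δ →
      ‖gradient u0 x‖ ≥ c := by
  have hne : (⟨0, by omega⟩ : Fin n) ≠ ⟨n - 1, by omega⟩ := by
    simp only [ne_eq, Fin.mk.injEq]
    omega
  set i0 : Fin n := ⟨0, by omega⟩ with hi0
  set iN : Fin n := ⟨n - 1, by omega⟩ with hiN
  have hapos : 0 < |a| := abs_pos.mpr ha
  have hRpos : (0:ℝ) < R := by linarith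
  refine ⟨|a| * (|a| * R / (8 * (|a| + |b| + 1))), by positivity, R/4, by positivity, ?_⟩
  intro x hx1 hx2 hx3
  -- geometry: on the thin cylinder, x_{i0}^2 + x_{iN}^2 is bounded below
  set S := ∑ i ∈ Finset.univ.filter
      (fun i : Fin n => i ≠ i0 ∧ i ≠ iN), (x i) ^ 2 with hS
  have hSnonneg : 0 ≤ S := Finset.sum_nonneg fun i _ => sq_nonneg _
  have hSle : S ≤ (R/4)^2 := by
    nlinarith [Real.sq_sqrt hSnonneg, Real.sqrt_nonneg S, hx3]
  have hsum : x i0 ^ 2 + x iN ^ 2 + S = ‖x‖ ^ 2 := by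
    have hnorm : ‖x‖ ^ 2 = ∑ i, (x i) ^ 2 := by
      rw [EuclideanSpace.norm_eq, Real.sq_sqrt (by positivity)]
      simp [sq_abs]
    rw [hnorm, stmt17_sum_split n x i0 iN hne, hS]
  have hx1sq : x i0 ^ 2 + x iN ^ 2 > R^2/4 - (R/4)^2 := by
    nlinarith [hx1, norm_nonneg x]
  -- derivative setup
  set L0 := EuclideanSpace.proj (𝕜 := ℝ) i0 with hL0
  set Ln := EuclideanSpace.proj (𝕜 := ℝ) iN with hLn
  set D' : EuclideanSpace ℝ (Fin n) →L[ℝ] ℝ :=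
    a • (x i0 • Ln + x iN • L0) + b • (x iN • Ln + x iN • Ln) with hD'
  have hder : HasFDerivAt u0 D' x := by
    have h0 : HasFDerivAt (fun y : EuclideanSpace ℝ (Fin n) => y i0) L0 x :=
      L0.hasFDerivAt
    have hN : HasFDerivAt (fun y : EuclideanSpace ℝ (Fin n) => y iN) Ln x :=
      Ln.hasFDerivAt
    have h1 : HasFDerivAt (fun y : EuclideanSpace ℝ (Fin n) => a * (y i0 * y iN))
        (a • (x i0 • Ln + x iN • L0)) x := (h0.mul hN).const_mul a
    have h2 : HasFDerivAt (fun y : EuclideanSpace ℝ (Fin n) => b * (y iN * y iN))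
        (b • (x iN • Ln + x iN • Ln)) x := (hN.mul hN).const_mul b
    have h3 := h1.add h2
    refine h3.congr_of_eventuallyEq (Filter.Eventually.of_forall fun y => ?_)
    rw [hu0]; simp only [Pi.add_apply]; ring
  have hfd : fderiv ℝ u0 x = D' := hder.fderiv
  -- lower bound for the gradient norm by directional derivatives
  have key : ∀ v : EuclideanSpace ℝ (Fin n), ‖v‖ = 1 → |D' v| ≤ ‖gradient u0 x‖ := by
    intro v hv
    have hi : inner ℝ (gradient u0 x) v = fderiv ℝ u0 x v :=
      InnerProductSpace.toDual_symm_apply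
    rw [hfd] at hi
    calc |D' v| = |inner ℝ (gradient u0 x) v| := by rw [hi]
      _ ≤ ‖gradient u0 x‖ * ‖v‖ := abs_real_inner_le_norm _ _
      _ = ‖gradient u0 x‖ := by rw [hv, mul_one]
  have hv0 : D' (EuclideanSpace.single i0 1) = a * x iN := by
    simp [hD', hL0, hLn, EuclideanSpace.single_apply, hne, hne.symm]
  have hvN : D' (EuclideanSpace.single iN 1) = a * x i0 + 2 * b * x iN := by
    simp [hD', hL0, hLn, EuclideanSpace.single_apply, hne, hne.symm]
    ring
  have key0 : |a * x iN| ≤ ‖gradient u0 x‖ := by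
    rw [← hv0]; exact key _ (by simp)
  have keyN : |a * x i0 + 2 * b * x iN| ≤ ‖gradient u0 x‖ := by
    rw [← hvN]; exact key _ (by simp)
  exact stmt17_arith a b R (x i0) (x iN) _ hapos hRpos hx1sq key0 keyN
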